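/- Let ν be a non-degenerate probability measure on ℝ with support bounded from above and let B = B(ν) = max(0, sup supp(ν)). Then lim_{z→B⁺} K_ν(z) = m₊(ν), i.e. the limit of the K-transform as z decreases to B exists and equals the right endpoint of the domain of means, m₊(ν) = B − lim_{z→B⁺} 1/G_ν(z) = sup_{θ ∈ (0,θ₊)} k_ν(θ). -/

import Mathlib

open MeasureTheory Filter Topology Set

/-- The Cauchy transform `G_ν(z) = ∫ 1/(z-x) dν(x)` of a measure on `ℝ`, for real `z`. -/
noncomputable def cauchyT (ν : Measure ℝ) (z : ℝ) : ℝ := ∫ x, (z - x)⁻¹ ∂ν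

/-- The K-transform (self-energy) `K_ν(z) = z - 1/G_ν(z)`. -/
noncomputable def kT (ν : Measure ℝ) (z : ℝ) : ℝ := z - (cauchyT ν z)⁻¹

/-- `M_ν(θ) = ∫ 1/(1-θx) dν(x)`. -/
noncomputable def Mgen (ν : Measure ℝ) (θ : ℝ) : ℝ := ∫ x, (1 - θ * x)⁻¹ ∂ν

/-- The mean of `P_{(θ,ν)}`: `k_ν(θ) = (M_ν(θ) - 1)/(θ M_ν(θ))`. -/
noncomputable def kMean (ν : Measure ℝ) (θ : ℝ) : ℝ := (Mgen ν θ - 1) / (θ * Mgen ν θ)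

/-- `B(ν) = max(0, sup supp(ν)) = 1/θ₊`. -/
noncomputable def Bv (ν : Measure ℝ) : ℝ := max 0 (sInf {b : ℝ | ν (Set.Ioi b) = 0})

/-- for a non-degenerate probability measure `ν` with support bounded from
above and `B = B(ν) = max(0, sup supp ν)`, the limit of the K-transform as `z ↓ B`
exists and equals `m₊(ν) = B - lim_{z→B⁺} 1/G_ν(z)`, which is the supremum of the mean
function `k_ν` over `(0, θ₊)` (encoded as `{θ | 0 < θ ∧ θ B(ν) < 1}`). -/
theorem kTransform_tendsto_mplus
    (ν : Measure ℝ) [IsProbabilityMeasure ν]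
    (hnd : ∀ a : ℝ, ν ≠ Measure.dirac a)
    (b : ℝ) (hb : ν (Set.Ioi b) = 0) :
    ∃ L : ℝ, 0 ≤ L ∧
      Tendsto (fun z : ℝ => (cauchyT ν z)⁻¹) (𝓝[>] (Bv ν)) (𝓝 L) ∧
      Tendsto (kT ν) (𝓝[>] (Bv ν)) (𝓝 (Bv ν - L)) ∧
      IsLUB (kMean ν '' {θ : ℝ | 0 < θ ∧ θ * Bv ν < 1}) (Bv ν - L) := by
  classical
  set B : ℝ := Bv ν with hBdef
  have hB0 : (0:ℝ) ≤ B := le_max_left _ _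
  have hSne : {c : ℝ | ν (Set.Ioi c) = 0}.Nonempty := ⟨b, hb⟩
  -- the set of null tails is bounded below
  -- B bounds the sInf from above
  have hBInf : sInf {c : ℝ | ν (Set.Ioi c) = 0} ≤ B := le_max_right _ _
  -- ν (Ioi B) = 0
  have hnullB : ν (Set.Ioi B) = 0 := by
    have hU : Set.Ioi B = ⋃ n : ℕ, Set.Ioi (B + ((n:ℝ)+1)⁻¹) := by
      ext x
      simp only [Set.mem_Ioi, Set.mem_iUnion]
      constructor
      · intro hx
        obtain ⟨n, hn⟩ := exists_nat_one_div_lt (sub_pos.2 hx)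
        exact ⟨n, by rw [one_div] at hn; linarith⟩
      · rintro ⟨n, hn⟩
        have : (0:ℝ) < ((n:ℝ)+1)⁻¹ := by positivity
        linarith
    rw [hU]
    refine measure_iUnion_null fun n => ?_
    have hlt : sInf {c : ℝ | ν (Set.Ioi c) = 0} < B + ((n:ℝ)+1)⁻¹ := by
      have : (0:ℝ) < ((n:ℝ)+1)⁻¹ := by positivity
      linarith
    obtain ⟨c, hc, hcl⟩ := exists_lt_of_csInf_lt hSne hlt
    exact measure_mono_null (fun x hx => lt_trans hcl hx) hc
  -- a.e. x ≤ B
  have hae : ∀ᵐ x ∂ν, x ≤ B := by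
    rw [ae_iff]
    have : {x : ℝ | ¬ x ≤ B} = Set.Ioi B := by ext x; simp
    rw [this]; exact hnullB
  -- measurability
  have hmeas : ∀ z : ℝ, AEStronglyMeasurable (fun x : ℝ => (z - x)⁻¹) ν :=
    fun z => ((measurable_const.sub measurable_id).inv).aestronglyMeasurable
  -- integrability
  have hint : ∀ z : ℝ, B < z → Integrable (fun x : ℝ => (z - x)⁻¹) ν := by
    intro z hz
    refine (integrable_const ((z - B)⁻¹)).mono' (hmeas z) ?_
    filter_upwards [hae] with x hx
    have h1 : (0:ℝ) < z - x := by linarith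
    rw [Real.norm_eq_abs, abs_of_nonneg (by positivity : (0:ℝ) ≤ (z - x)⁻¹)]
    exact inv_anti₀ (by linarith) (by linarith)
  -- positivity of the Cauchy transform
  have hpos : ∀ z : ℝ, B < z → 0 < cauchyT ν z := by
    intro z hz
    rw [cauchyT]
    refine (integral_pos_iff_support_of_nonneg_ae ?_ (hint z hz)).2 ?_
    · filter_upwards [hae] with x hx
      have : (0:ℝ) < z - x := by linarith
      positivity
    · have hcompl : ν (Function.support fun x : ℝ => (z - x)⁻¹)ᶜ = 0 := by
        refine measure_mono_null (fun x hx => ?_) hnullB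
        simp only [Function.mem_support, not_not, Set.mem_compl_iff] at hx
        have hzx : z - x = 0 := by
          by_contra h
          exact (inv_ne_zero h) hx
        have : x = z := by linarith
        simpa [this] using hz
      have hle : (1 : ENNReal) ≤ ν (Function.support fun x : ℝ => (z - x)⁻¹) := by
        have h := measure_union_le (μ := ν) (Function.support fun x : ℝ => (z - x)⁻¹)
          (Function.support fun x : ℝ => (z - x)⁻¹)ᶜ
        rwa [Set.union_compl_self, measure_univ, hcompl, add_zero] at h
      exact lt_of_lt_of_le (by norm_num) hle
  -- G is antitone on (B, ∞)
  have hGanti : ∀ z₁ z₂ : ℝ, B < z₂ → z₂ ≤ z₁ → cauchyT ν z₁ ≤ cauchyT ν z₂ := by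
    intro z₁ z₂ h2 h12
    refine integral_mono_ae (hint z₁ (lt_of_lt_of_le h2 h12)) (hint z₂ h2) ?_
    filter_upwards [hae] with x hx
    exact inv_anti₀ (by linarith) (by linarith)
  set F : ℝ → ℝ := fun z => (cauchyT ν z)⁻¹ with hFdef
  have hFmono : MonotoneOn F (Set.Ioi B) := by
    intro z₂ h2 z₁ h1 h12
    exact inv_anti₀ (hpos z₁ h1) (hGanti z₁ z₂ h2 h12)
  have hFbdd : BddBelow (F '' Set.Ioi B) := by
    refine ⟨0, ?_⟩
    rintro _ ⟨z, hz, rfl⟩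
    exact inv_nonneg.2 (hpos z hz).le
  have hne' : (Set.Ioi B).Nonempty := ⟨B + 1, by simp⟩
  set L : ℝ := sInf (F '' Set.Ioi B) with hLdef
  have hL0 : 0 ≤ L := by
    refine le_csInf (hne'.image F) ?_
    rintro _ ⟨z, hz, rfl⟩
    exact inv_nonneg.2 (hpos z hz).le
  have hFtd : Tendsto F (𝓝[>] B) (𝓝 L) := hFmono.tendsto_nhdsGT hFbdd
  have hKtd : Tendsto (kT ν) (𝓝[>] B) (𝓝 (B - L)) := by
    have hid : Tendsto (fun z : ℝ => z) (𝓝[>] B) (𝓝 B) :=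
      tendsto_id.mono_left nhdsWithin_le_nhds
    have := hid.sub hFtd
    exact this
  -- Chebyshev integral inequality for the two increasing kernels
  have hcheb : ∀ z₁ z₂ : ℝ, B < z₂ → z₂ ≤ z₁ →
      cauchyT ν z₁ * cauchyT ν z₂ ≤ ∫ x, (z₁ - x)⁻¹ * (z₂ - x)⁻¹ ∂ν := by
    intro z₁ z₂ h2 h12
    have h1 : B < z₁ := lt_of_lt_of_le h2 h12
    set f : ℝ → ℝ := fun x => (z₁ - x)⁻¹ with hf
    set g : ℝ → ℝ := fun x => (z₂ - x)⁻¹ with hg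
    have hif : Integrable f ν := hint z₁ h1
    have hig : Integrable g ν := hint z₂ h2
    have hifg : Integrable (fun x => f x * g x) ν := by
      refine (integrable_const ((z₁ - B)⁻¹ * (z₂ - B)⁻¹)).mono'
        ((hmeas z₁).mul (hmeas z₂)) ?_
      filter_upwards [hae] with x hx
      simp only [hf, hg]
      have ha : (0:ℝ) < z₁ - x := by linarith
      have hbb : (0:ℝ) < z₂ - x := by linarith
      rw [Real.norm_eq_abs,
        abs_of_nonneg (mul_nonneg (inv_nonneg.2 ha.le) (inv_nonneg.2 hbb.le))]
      exact mul_le_mul (inv_anti₀ (by linarith) (by linarith))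
        (inv_anti₀ (by linarith) (by linarith)) (inv_nonneg.2 hbb.le)
        (inv_nonneg.2 (by linarith : (0:ℝ) ≤ z₁ - B))
    set Af : ℝ := ∫ x, f x ∂ν with hAf
    set Ag : ℝ := ∫ x, g x ∂ν with hAg
    set A1 : ℝ := ∫ x, f x * g x ∂ν with hA1
    have hkey : ∀ᵐ y ∂ν, 0 ≤ A1 - g y * Af - f y * Ag + f y * g y := by
      filter_upwards [hae] with y hy
      have hinner : 0 ≤ ∫ x, (f x - f y) * (g x - g y) ∂ν := by
        refine integral_nonneg_of_ae ?_
        filter_upwards [hae] with x hx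
        show (0:ℝ) ≤ (f x - f y) * (g x - g y)
        rcases le_total x y with hxy | hxy
        · have hf1 : f x ≤ f y := inv_anti₀ (by linarith) (by linarith)
          have hg1 : g x ≤ g y := inv_anti₀ (by linarith) (by linarith)
          nlinarith [mul_nonneg (sub_nonneg.2 hf1) (sub_nonneg.2 hg1)]
        · have hf1 : f y ≤ f x := inv_anti₀ (by linarith) (by linarith)
          have hg1 : g y ≤ g x := inv_anti₀ (by linarith) (by linarith)
          exact mul_nonneg (by linarith) (by linarith)
      have hexp : (fun x => (f x - f y) * (g x - g y))
          = fun x => (f x * g x - g y * f x) - (f y * g x - f y * g y) := by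
        funext x; ring
      have i1 : Integrable (fun x => g y * f x) ν := hif.const_mul (g y)
      have i2 : Integrable (fun x => f y * g x) ν := hig.const_mul (f y)
      have i3 : Integrable (fun x => f x * g x - g y * f x) ν := hifg.sub i1
      have i4 : Integrable (fun x => f y * g x - f y * g y) ν := i2.sub (integrable_const _)
      rw [hexp, integral_sub i3 i4, integral_sub hifg i1,
        integral_sub i2 (integrable_const _),
        integral_const_mul, integral_const_mul, integral_const] at hinner
      simp only [measure_univ, probReal_univ, ENNReal.toReal_one, smul_eq_mul, one_mul] at hinner
      rw [← hAf, ← hAg, ← hA1] at hinner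
      linarith
    have houter : 0 ≤ ∫ y, (A1 - g y * Af - f y * Ag + f y * g y) ∂ν :=
      integral_nonneg_of_ae hkey
    have hcalc : ∫ y, (A1 - g y * Af - f y * Ag + f y * g y) ∂ν
        = A1 - Ag * Af - Af * Ag + A1 := by
      have j1 : Integrable (fun y => g y * Af) ν := hig.mul_const Af
      have j2 : Integrable (fun y => f y * Ag) ν := hif.mul_const Ag
      have j3 : Integrable (fun y => A1 - g y * Af) ν := (integrable_const A1).sub j1
      have j4 : Integrable (fun y => A1 - g y * Af - f y * Ag) ν := j3.sub j2
      rw [integral_add j4 hifg, integral_sub j3 j2,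
        integral_sub (integrable_const A1) j1,
        integral_mul_const, integral_mul_const, integral_const]
      simp only [measure_univ, probReal_univ, ENNReal.toReal_one, smul_eq_mul, one_mul]
      rw [← hAf, ← hAg, ← hA1]
    rw [hcalc] at houter
    have hAfG : cauchyT ν z₁ = Af := rfl
    have hAgG : cauchyT ν z₂ = Ag := rfl
    rw [hAfG, hAgG]
    show Af * Ag ≤ A1
    linarith
  -- the gap inequality for F
  have hFgap : ∀ z₁ z₂ : ℝ, B < z₂ → z₂ ≤ z₁ → z₁ - z₂ ≤ F z₁ - F z₂ := by
    intro z₁ z₂ h2 h12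
    have h1 : B < z₁ := lt_of_lt_of_le h2 h12
    have hG1 := hpos z₁ h1
    have hG2 := hpos z₂ h2
    have hdiff : cauchyT ν z₂ - cauchyT ν z₁
        = (z₁ - z₂) * ∫ x, (z₁ - x)⁻¹ * (z₂ - x)⁻¹ ∂ν := by
      rw [cauchyT, cauchyT, ← integral_sub (hint z₂ h2) (hint z₁ h1),
        ← integral_const_mul]
      refine integral_congr_ae ?_
      filter_upwards [hae] with x hx
      have ha : (0:ℝ) < z₁ - x := by linarith
      have hbb : (0:ℝ) < z₂ - x := by linarith
      have ha' := ha.ne'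
      have hb' := hbb.ne'
      show (z₂ - x)⁻¹ - (z₁ - x)⁻¹ = (z₁ - z₂) * ((z₁ - x)⁻¹ * (z₂ - x)⁻¹)
      rw [inv_sub_inv hb' ha', div_eq_mul_inv, mul_inv]
      ring
    have hA1 : cauchyT ν z₁ * cauchyT ν z₂ ≤ ∫ x, (z₁ - x)⁻¹ * (z₂ - x)⁻¹ ∂ν :=
      hcheb z₁ z₂ h2 h12
    have hstep : (z₁ - z₂) * (cauchyT ν z₁ * cauchyT ν z₂)
        ≤ cauchyT ν z₂ - cauchyT ν z₁ := by
      rw [hdiff]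
      exact mul_le_mul_of_nonneg_left hA1 (by linarith)
    have hFeq : F z₁ - F z₂
        = (cauchyT ν z₂ - cauchyT ν z₁) / (cauchyT ν z₁ * cauchyT ν z₂) := by
      simp only [hFdef]
      exact inv_sub_inv hG1.ne' hG2.ne'
    rw [hFeq, le_div_iff₀ (by positivity)]
    exact hstep
  -- kT is antitone on (B, ∞)
  have hKanti : ∀ z₁ z₂ : ℝ, B < z₂ → z₂ ≤ z₁ → kT ν z₁ ≤ kT ν z₂ := by
    intro z₁ z₂ h2 h12
    have hgap := hFgap z₁ z₂ h2 h12
    have hF1 : F z₁ = (cauchyT ν z₁)⁻¹ := rfl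
    have hF2 : F z₂ = (cauchyT ν z₂)⁻¹ := rfl
    show z₁ - (cauchyT ν z₁)⁻¹ ≤ z₂ - (cauchyT ν z₂)⁻¹
    rw [← hF1, ← hF2]
    linarith
  -- kMean θ = kT (θ⁻¹)
  have hkm : ∀ θ : ℝ, 0 < θ → B < θ⁻¹ → kMean ν θ = kT ν θ⁻¹ := by
    intro θ hθ hz
    have hG := hpos θ⁻¹ hz
    have hMg : Mgen ν θ = θ⁻¹ * cauchyT ν θ⁻¹ := by
      rw [Mgen, cauchyT, ← integral_const_mul]
      refine integral_congr_ae (Eventually.of_forall fun x => ?_)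
      show ((1:ℝ) - θ * x)⁻¹ = θ⁻¹ * (θ⁻¹ - x)⁻¹
      rw [show (1:ℝ) - θ * x = θ * (θ⁻¹ - x) from by
        rw [mul_sub, mul_inv_cancel₀ hθ.ne'], mul_inv]
    rw [kMean, kT, hMg, show θ * (θ⁻¹ * cauchyT ν θ⁻¹) = cauchyT ν θ⁻¹ from by
      rw [← mul_assoc, mul_inv_cancel₀ hθ.ne', one_mul]]
    rw [sub_div, mul_div_assoc, div_self hG.ne', mul_one, one_div]
  -- the two images coincide
  have himg : kMean ν '' {θ : ℝ | 0 < θ ∧ θ * B < 1} = kT ν '' Set.Ioi B := by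
    ext y
    constructor
    · rintro ⟨θ, ⟨hθ, hθB⟩, rfl⟩
      have hz : B < θ⁻¹ := by
        have h' : θ * B < θ * θ⁻¹ := by
          rw [mul_inv_cancel₀ hθ.ne']; exact hθB
        exact lt_of_mul_lt_mul_left h' hθ.le
      exact ⟨θ⁻¹, hz, (hkm θ hθ hz).symm⟩
    · rintro ⟨z, hz, rfl⟩
      have hz0 : 0 < z := lt_of_le_of_lt hB0 hz
      refine ⟨z⁻¹, ⟨inv_pos.2 hz0, ?_⟩, ?_⟩
      · have h' : z⁻¹ * B < z⁻¹ * z := mul_lt_mul_of_pos_left hz (inv_pos.2 hz0)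
        rwa [inv_mul_cancel₀ hz0.ne'] at h'
      · rw [hkm z⁻¹ (inv_pos.2 hz0) (by rwa [inv_inv]), inv_inv]
  -- the LUB property
  have hlub : IsLUB (kT ν '' Set.Ioi B) (B - L) := by
    constructor
    · rintro _ ⟨z, hz, rfl⟩
      refine ge_of_tendsto hKtd ?_
      filter_upwards [Ioo_mem_nhdsGT hz] with w hw
      exact hKanti z w hw.1 hw.2.le
    · intro y hy
      refine le_of_tendsto hKtd ?_
      filter_upwards [self_mem_nhdsWithin] with w hw
      exact hy ⟨w, hw, rfl⟩
  exact ⟨L, hL0, hFtd, hKtd, by rwa [himg]⟩
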